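/- With the definitions and assumptions in the context, suppose ε ≥ (1/2)·T_s·l_φ·l_s and x_0 ∈ S_*. Then for all t ≥ 0, x(t) ∈ S_* ⊆ S_s. (The set S_* is forward invariant under the closed-loop control, so the state remains in the safe set for all time.) -/

import Mathlib

open Set

/-- Under the semiflow `φ` on `ℝ^n` with safe set `S_s = {h_s ≥ 0}`, backup
safe set `S_b = {h_b ≥ 0}` with `S_b ⊆ S_s` forward invariant under `φ`,
`S_* = {x : h_*(x) ≥ 0}` where `h_*(x) = min{h_b(φ(x,T)), inf_{τ∈[0,T]} h_s(φ(x,τ))}`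
(so `x ∈ S_*` iff `h_b(φ(x,T)) ≥ 0` and `h_s(φ(x,τ)) ≥ 0` for all `τ ∈ [0,T]`),
`T_s = T/N`, `h̄_*` the sampled barrier function, `h_s` Lipschitz with constant `l_s > 0`,
`τ ↦ φ(x,τ)` Lipschitz on `[0,T]` with constant `l_φ > 0`, `h < h̄_*` pointwise,
`Γ ⊆ {x : h(x) ≥ ε}` closed, and a continuous closed-loop trajectory `x(·)` with
`x(0) = x₀` satisfying the backup-flow property (if `x(τ) ∉ Γ` for all `τ ∈ (t₂,t₃]`
then `x(t₃) = φ(x(t₂), t₃ − t₂)`): if `ε ≥ (1/2)·T_s·l_φ·l_s` and `x₀ ∈ S_*`, then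
for all `t ≥ 0`, `x(t) ∈ S_* ⊆ S_s`. -/
theorem closed_loop_forward_invariance_of_Sstar
    (n : ℕ) (hn : 0 < n)
    (φ : EuclideanSpace ℝ (Fin n) → ℝ → EuclideanSpace ℝ (Fin n))
    (hφ0 : ∀ x, φ x 0 = x)
    (hφadd : ∀ (x : EuclideanSpace ℝ (Fin n)) (s t : ℝ), 0 ≤ s → 0 ≤ t →
      φ x (s + t) = φ (φ x s) t)
    (hs hb : EuclideanSpace ℝ (Fin n) → ℝ)
    (Ss Sb Sstar : Set (EuclideanSpace ℝ (Fin n)))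
    (hSs : Ss = {x | 0 ≤ hs x})
    (hSb : Sb = {x | 0 ≤ hb x})
    (hsub : Sb ⊆ Ss)
    (hinv : ∀ x ∈ Sb, ∀ t : ℝ, 0 ≤ t → φ x t ∈ Sb)
    (T : ℝ) (hT : 0 < T)
    (hSstar : Sstar = {x | 0 ≤ hb (φ x T) ∧ ∀ τ ∈ Icc (0:ℝ) T, 0 ≤ hs (φ x τ)})
    (N : ℕ) (hN : 0 < N) (Ts : ℝ) (hTs : Ts = T / N)
    (hbarStar : EuclideanSpace ℝ (Fin n) → ℝ)
    (hhbarStar : ∀ x, hbarStar x =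
      min (hb (φ x ((N : ℝ) * Ts)))
        ((Finset.range (N + 1)).inf' Finset.nonempty_range_add_one
          (fun i => hs (φ x ((i : ℝ) * Ts)))))
    (ls lφ : ℝ) (hls : 0 < ls) (hlφ : 0 < lφ)
    (hlip_s : ∀ x y : EuclideanSpace ℝ (Fin n), |hs x - hs y| ≤ ls * ‖x - y‖)
    (hlip_φ : ∀ x : EuclideanSpace ℝ (Fin n), ∀ τ₁ ∈ Icc (0:ℝ) T, ∀ τ₂ ∈ Icc (0:ℝ) T,
      ‖φ x τ₁ - φ x τ₂‖ ≤ lφ * |τ₁ - τ₂|)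
    (h : EuclideanSpace ℝ (Fin n) → ℝ)
    (hlt : ∀ x, h x < hbarStar x)
    (ε : ℝ) (hε : (1 / 2) * Ts * lφ * ls ≤ ε)
    (Γ : Set (EuclideanSpace ℝ (Fin n)))
    (hΓ : Γ ⊆ {x | ε ≤ h x})
    (hΓclosed : IsClosed Γ)
    (xtraj : ℝ → EuclideanSpace ℝ (Fin n))
    (hxcont : Continuous xtraj)
    (x₀ : EuclideanSpace ℝ (Fin n))
    (hxtraj0 : xtraj 0 = x₀)
    (hx₀ : x₀ ∈ Sstar)
    (hflow : ∀ t₂ t₃ : ℝ, 0 ≤ t₂ → t₂ ≤ t₃ →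
      (∀ τ : ℝ, t₂ < τ → τ ≤ t₃ → xtraj τ ∉ Γ) → xtraj t₃ = φ (xtraj t₂) (t₃ - t₂)) :
    (∀ t : ℝ, 0 ≤ t → xtraj t ∈ Sstar) ∧ Sstar ⊆ Ss := by

  subst hSs hSb hSstar hTs
  have hN' : (0:ℝ) < N := Nat.cast_pos.mpr hN
  have hTs0 : (0:ℝ) < T / N := div_pos hT hN'
  have hNTs : (N : ℝ) * (T / N) = T := by field_simp
  have hε0 : 0 < ε := lt_of_lt_of_le (by positivity) hε
  -- Γ ⊆ Sstar
  have hΓsub : ∀ x ∈ Γ, 0 ≤ hb (φ x T) ∧ ∀ τ ∈ Icc (0:ℝ) T, 0 ≤ hs (φ x τ) := by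
    intro x hx
    have hhx : ε ≤ h x := hΓ hx
    have hbar : ε < hbarStar x := lt_of_le_of_lt hhx (hlt x)
    rw [hhbarStar, lt_min_iff] at hbar
    obtain ⟨hbar1, hbar2⟩ := hbar
    constructor
    · rw [hNTs] at hbar1; linarith
    · intro τ hτ
      set i : ℕ := ⌊τ / (T / N) + 1/2⌋₊ with hi
      have hτdiv : 0 ≤ τ / (T / N) := div_nonneg hτ.1 hTs0.le
      have hτN : τ / (T / N) ≤ (N : ℝ) := by
        rw [div_le_iff₀ hTs0]; rw [← hNTs] at hτ; linarith [hτ.2]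
      have hiN : i ≤ N := by
        have : i < N + 1 := by
          rw [hi, Nat.floor_lt (by positivity)]
          push_cast; linarith
        omega
      have h1 : (i : ℝ) ≤ τ / (T / N) + 1/2 := Nat.floor_le (by positivity)
      have h2 : τ / (T / N) + 1/2 < (i : ℝ) + 1 := Nat.lt_floor_add_one _
      have hdist : |τ - (i : ℝ) * (T / N)| ≤ (T / N) / 2 := by
        rw [abs_le]
        constructor <;> nlinarith [hTs0, mul_le_mul_of_nonneg_right h1 hTs0.le,
          mul_le_mul_of_nonneg_right h2.le hTs0.le, (div_mul_cancel₀ τ hTs0.ne' : τ / (T/N) * (T/N) = τ)]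
      have hiTs_mem : (i : ℝ) * (T / N) ∈ Icc (0:ℝ) T := by
        constructor
        · positivity
        · have := mul_le_mul_of_nonneg_right (Nat.cast_le.mpr hiN : (i:ℝ) ≤ N) hTs0.le
          linarith [hNTs]
      have hφlip := hlip_φ x τ hτ ((i : ℝ) * (T / N)) hiTs_mem
      have hslip := hlip_s (φ x τ) (φ x ((i : ℝ) * (T / N)))
      have hinf : ε < hs (φ x ((i : ℝ) * (T / N))) :=
        lt_of_lt_of_le hbar2 (Finset.inf'_le _ (Finset.mem_range.mpr (Nat.lt_succ_of_le hiN)))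
      have hchain : ls * ‖φ x τ - φ x ((i : ℝ) * (T / N))‖ ≤ ls * (lφ * ((T / N) / 2)) := by
        apply mul_le_mul_of_nonneg_left _ hls.le
        calc ‖φ x τ - φ x ((i : ℝ) * (T / N))‖ ≤ lφ * |τ - (i : ℝ) * (T / N)| := hφlip
          _ ≤ lφ * ((T / N) / 2) := mul_le_mul_of_nonneg_left hdist hlφ.le
      have habs := abs_le.mp hslip
      nlinarith [habs.1, habs.2]
  -- forward invariance of Sstar under φ
  have hSstarInv : ∀ x : EuclideanSpace ℝ (Fin n),
      (0 ≤ hb (φ x T) ∧ ∀ τ ∈ Icc (0:ℝ) T, 0 ≤ hs (φ x τ)) → ∀ t : ℝ, 0 ≤ t →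
      (0 ≤ hb (φ (φ x t) T) ∧ ∀ τ ∈ Icc (0:ℝ) T, 0 ≤ hs (φ (φ x t) τ)) := by
    intro x hx t ht
    have hxT : φ x T ∈ {y : EuclideanSpace ℝ (Fin n) | 0 ≤ hb y} := hx.1
    constructor
    · have e1 : φ x (t + T) = φ (φ x t) T := hφadd x t T ht hT.le
      have e2 : φ x (T + t) = φ (φ x T) t := hφadd x T t hT.le ht
      have e3 : φ (φ x t) T = φ (φ x T) t := by rw [← e1, add_comm, e2]
      rw [e3]
      exact hinv _ hxT t ht
    · intro τ hτ
      have e1 : φ x (t + τ) = φ (φ x t) τ := hφadd x t τ ht hτ.1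
      rw [← e1]
      by_cases hc : t + τ ≤ T
      · exact hx.2 (t + τ) ⟨by linarith [hτ.1], hc⟩
      · have e2 : φ x (t + τ) = φ (φ x T) (t + τ - T) := by
          have := hφadd x T (t + τ - T) hT.le (by linarith)
          rw [← this]; ring_nf
        rw [e2]
        exact hsub (hinv _ hxT _ (by linarith))
  refine ⟨?_, ?_⟩
  · intro t ht
    by_cases hK : {τ : ℝ | τ ∈ Icc (0:ℝ) t ∧ xtraj τ ∈ Γ}.Nonempty
    · have hKc : IsClosed {τ : ℝ | τ ∈ Icc (0:ℝ) t ∧ xtraj τ ∈ Γ} := by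
        have : {τ : ℝ | τ ∈ Icc (0:ℝ) t ∧ xtraj τ ∈ Γ} = Icc (0:ℝ) t ∩ xtraj ⁻¹' Γ := rfl
        rw [this]
        exact isClosed_Icc.inter (hΓclosed.preimage hxcont)
      have hbdd : BddAbove {τ : ℝ | τ ∈ Icc (0:ℝ) t ∧ xtraj τ ∈ Γ} :=
        ⟨t, fun τ hτ => hτ.1.2⟩
      set s := sSup {τ : ℝ | τ ∈ Icc (0:ℝ) t ∧ xtraj τ ∈ Γ} with hsdef
      have hsK : s ∈ {τ : ℝ | τ ∈ Icc (0:ℝ) t ∧ xtraj τ ∈ Γ} := hKc.csSup_mem hK hbdd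
      have hnot : ∀ τ : ℝ, s < τ → τ ≤ t → xtraj τ ∉ Γ := by
        intro τ h1 h2 hmem
        exact absurd (le_csSup hbdd ⟨⟨le_trans hsK.1.1 h1.le, h2⟩, hmem⟩) (not_le.mpr h1)
      have hfl := hflow s t hsK.1.1 hsK.1.2 hnot
      rw [hfl]
      exact hSstarInv _ (hΓsub _ hsK.2) _ (by linarith [hsK.1.2])
    · have hnot : ∀ τ : ℝ, (0:ℝ) < τ → τ ≤ t → xtraj τ ∉ Γ := by
        intro τ h1 h2 hmem
        exact hK ⟨τ, ⟨h1.le, h2⟩, hmem⟩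
      rw [hflow 0 t le_rfl ht hnot, hxtraj0, sub_zero]
      exact hSstarInv x₀ hx₀ t ht
  · intro x hx
    have h0 := hx.2 0 ⟨le_rfl, hT.le⟩
    rw [hφ0] at h0
    exact h0
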